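/- Finite-time convergence into the invariant set (Lemma 2, claim ii): let x(k) be the GRU state trajectory generated from an arbitrary initial state x̄ ∈ ℝ^{n_x} by an input sequence u with ‖u(t)‖_∞ ≤ 1 for all t. Then there exists a finite k̄ ≥ 0, depending only on x̄ and the GRU weights (in particular not on the input sequence), such that ‖x(k)‖_∞ ≤ 1 for all k ≥ k̄. -/

import Mathlib

open Real Filter

/-- The _root_.sigmoid activation function. -/
noncomputable def sigmoid (s : ℝ) : ℝ := 1 / (1 + Real.exp (-s))

/-- Induced infinity norm of a matrix (maximum absolute row sum). -/
noncomputable def matNorm {n m : ℕ} (A : Matrix (Fin n) (Fin m) ℝ) : ℝ :=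
  ⨆ i, ∑ j, |A i j|

/-- Infinity norm of the horizontal concatenation `[A B c]`
(maximum absolute row sum of the concatenated matrix). -/
noncomputable def catNorm {n m p : ℕ} (A : Matrix (Fin n) (Fin m) ℝ)
    (B : Matrix (Fin n) (Fin p) ℝ) (c : Fin n → ℝ) : ℝ :=
  ⨆ i, (∑ j, |A i j| + ∑ j, |B i j| + |c i|)

/-- One step of the single-layer GRU:
`x⁺ = z ∘ x + (1 - z) ∘ tanh(W_r u + U_r (f ∘ x) + b_r)`,
`z = σ(W_z u + U_z x + b_z)`, `f = σ(W_f u + U_f x + b_f)`. -/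
noncomputable def gruStep {nu nx : ℕ}
    (Wz Wf Wr : Matrix (Fin nx) (Fin nu) ℝ)
    (Uz Uf Ur : Matrix (Fin nx) (Fin nx) ℝ)
    (bz bf br : Fin nx → ℝ)
    (u : Fin nu → ℝ) (x : Fin nx → ℝ) : Fin nx → ℝ :=
  let z : Fin nx → ℝ := fun i => _root_.sigmoid ((Wz.mulVec u + Uz.mulVec x + bz) i)
  let f : Fin nx → ℝ := fun i => _root_.sigmoid ((Wf.mulVec u + Uf.mulVec x + bf) i)
  let r : Fin nx → ℝ := fun i => Real.tanh ((Wr.mulVec u + Ur.mulVec (f * x) + br) i)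
  fun j => z j * x j + (1 - z j) * r j

lemma tanh_eq' (x : ℝ) : Real.tanh x = 1 - 2 / (Real.exp (2*x) + 1) := by
  rw [Real.tanh_eq_sinh_div_cosh, Real.sinh_eq, Real.cosh_eq]
  have h1 : Real.exp x ≠ 0 := (Real.exp_pos x).ne'
  have h2 : Real.exp (2*x) = Real.exp x * Real.exp x := by
    rw [two_mul, Real.exp_add]
  have h3 : Real.exp (-x) = (Real.exp x)⁻¹ := by rw [Real.exp_neg]
  have h4 : (Real.exp x + Real.exp (-x)) / 2 ≠ 0 := by
    positivity
  have h5 : Real.exp (2*x) + 1 ≠ 0 := by positivity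
  rw [h2, h3]
  field_simp
  ring

lemma tanh_mono : Monotone Real.tanh := by
  intro a b hab
  rw [tanh_eq', tanh_eq']
  have ha : (0:ℝ) < Real.exp (2*a) + 1 := by positivity
  have hb : (0:ℝ) < Real.exp (2*b) + 1 := by positivity
  have : Real.exp (2*a) + 1 ≤ Real.exp (2*b) + 1 := by
    have := Real.exp_le_exp.2 (by linarith : 2*a ≤ 2*b); linarith
  have := div_le_div_of_nonneg_left (by norm_num : (0:ℝ) ≤ 2) ha this
  linarith

lemma tanh_lt_one' (x : ℝ) : Real.tanh x < 1 := by
  rw [tanh_eq']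
  have : (0:ℝ) < 2 / (Real.exp (2*x) + 1) := by positivity
  linarith

lemma abs_tanh_le {b C : ℝ} (h : |b| ≤ C) : |Real.tanh b| ≤ Real.tanh C := by
  rw [abs_le]
  constructor
  · have : Real.tanh (-C) ≤ Real.tanh b := tanh_mono (by cases abs_le.1 h; linarith)
    rwa [Real.tanh_neg] at this
  · exact tanh_mono ((le_abs_self b).trans h)

lemma sigmoid_pos (s : ℝ) : 0 < _root_.sigmoid s := by
  unfold _root_.sigmoid; positivity

lemma sigmoid_lt_one (s : ℝ) : _root_.sigmoid s < 1 := by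
  unfold _root_.sigmoid
  rw [div_lt_one (by positivity)]
  linarith [Real.exp_pos (-s)]

lemma sigmoid_mono : Monotone _root_.sigmoid := by
  intro a b hab
  unfold _root_.sigmoid
  have : Real.exp (-b) ≤ Real.exp (-a) := Real.exp_le_exp.2 (by linarith)
  apply div_le_div_of_nonneg_left (by norm_num) (by positivity)
  linarith

lemma rowsum_le_matNorm {n m : ℕ} (A : Matrix (Fin n) (Fin m) ℝ) (i : Fin n) :
    ∑ j, |A i j| ≤ matNorm A := by
  exact le_ciSup (f := fun i => ∑ j, |A i j|) (Set.Finite.bddAbove (Set.finite_range _)) i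

lemma matNorm_nonneg {n m : ℕ} (A : Matrix (Fin n) (Fin m) ℝ) (i : Fin n) :
    0 ≤ matNorm A :=
  le_trans (Finset.sum_nonneg fun j _ => abs_nonneg _) (rowsum_le_matNorm A i)

lemma row_bound {n m : ℕ} (A : Matrix (Fin n) (Fin m) ℝ) (v : Fin m → ℝ) (i : Fin n) :
    |A.mulVec v i| ≤ (∑ j, |A i j|) * ‖v‖ := by
  rw [Matrix.mulVec, dotProduct, Finset.sum_mul]
  refine (Finset.abs_sum_le_sum_abs _ _).trans (Finset.sum_le_sum fun j _ => ?_)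
  rw [abs_mul]
  exact mul_le_mul_of_nonneg_left ((Real.norm_eq_abs (v j)) ▸ norm_le_pi_norm v j)
    (abs_nonneg _)

lemma arg_bound {n m : ℕ} (W : Matrix (Fin n) (Fin m) ℝ) (U : Matrix (Fin n) (Fin n) ℝ)
    (b : Fin n → ℝ) (u : Fin m → ℝ) (w : Fin n → ℝ) (Mv : ℝ) (hu : ‖u‖ ≤ 1)
    (hw : ‖w‖ ≤ Mv) (i : Fin n) :
    |(W.mulVec u + U.mulVec w + b) i| ≤ matNorm W + matNorm U * Mv + ‖b‖ := by
  have h1 : |W.mulVec u i| ≤ matNorm W := by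
    refine (row_bound W u i).trans ?_
    calc (∑ j, |W i j|) * ‖u‖ ≤ matNorm W * 1 :=
          mul_le_mul (rowsum_le_matNorm W i) hu (norm_nonneg _) (matNorm_nonneg W i)
      _ = matNorm W := mul_one _
  have h2 : |U.mulVec w i| ≤ matNorm U * Mv :=
    (row_bound U w i).trans
      (mul_le_mul (rowsum_le_matNorm U i) hw (norm_nonneg _) (matNorm_nonneg U i))
  have h3 : |b i| ≤ ‖b‖ := (Real.norm_eq_abs (b i)) ▸ norm_le_pi_norm b i
  calc |(W.mulVec u + U.mulVec w + b) i| = |W.mulVec u i + U.mulVec w i + b i| := rfl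
    _ ≤ |W.mulVec u i + U.mulVec w i| + |b i| := abs_add_le _ _
    _ ≤ |W.mulVec u i| + |U.mulVec w i| + |b i| := by linarith [abs_add_le (W.mulVec u i) (U.mulVec w i)]
    _ ≤ matNorm W + matNorm U * Mv + ‖b‖ := by linarith

lemma conv_bound (z r xv m t : ℝ) (hz0 : 0 ≤ z) (hz1 : z ≤ 1) (hx : |xv| ≤ m) (hr : |r| ≤ t) :
    |z * xv + (1 - z) * r| ≤ z * m + (1 - z) * t := by
  calc |z * xv + (1 - z) * r| ≤ |z * xv| + |(1 - z) * r| := abs_add_le _ _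
    _ = z * |xv| + (1 - z) * |r| := by
        rw [abs_mul, abs_mul, abs_of_nonneg hz0, abs_of_nonneg (show (0:ℝ) ≤ 1 - z by linarith)]
    _ ≤ z * m + (1 - z) * t :=
        add_le_add (mul_le_mul_of_nonneg_left hx hz0)
          (mul_le_mul_of_nonneg_left hr (by linarith))

lemma abs_tanh_le_one (s : ℝ) : |Real.tanh s| ≤ 1 :=
  (abs_tanh_le (le_refl |s|)).trans (tanh_lt_one' _).le

/-- **Lemma 2, claim (ii): finite-time convergence into the invariant set.**
For any initial state `x̄` there exists a finite `k̄` (depending only on `x̄` and the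
GRU weights, not on the input sequence) such that any trajectory started at `x̄` and
driven by unity-bounded inputs satisfies `‖x(k)‖_∞ ≤ 1` for all `k ≥ k̄`. -/
theorem gru_finite_time_convergence {nu nx : ℕ}
    (Wz Wf Wr : Matrix (Fin nx) (Fin nu) ℝ)
    (Uz Uf Ur : Matrix (Fin nx) (Fin nx) ℝ)
    (bz bf br : Fin nx → ℝ)
    (xbar : Fin nx → ℝ) :
    ∃ kbar : ℕ, ∀ u : ℕ → Fin nu → ℝ, (∀ t, ‖u t‖ ≤ 1) →
      ∀ x : ℕ → Fin nx → ℝ, x 0 = xbar →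
        (∀ k, x (k + 1) = gruStep Wz Wf Wr Uz Uf Ur bz bf br (u k) (x k)) →
          ∀ k, kbar ≤ k → ‖x k‖ ≤ 1 := by
  rcases Nat.eq_zero_or_pos nx with h0 | hpos
  · subst h0
    refine ⟨0, fun u hu x hx0 hstep k hk => ?_⟩
    rw [pi_norm_le_iff_of_nonneg zero_le_one]
    exact fun i => i.elim0
  have i0 : Fin nx := ⟨0, hpos⟩
  set M : ℝ := max ‖xbar‖ 1 with hMdef
  have hM1 : (1:ℝ) ≤ M := le_max_right _ _
  set Cz : ℝ := matNorm Wz + matNorm Uz * M + ‖bz‖ with hCzdef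
  set Cr : ℝ := matNorm Wr + matNorm Ur * M + ‖br‖ with hCrdef
  set lam : ℝ := _root_.sigmoid Cz with hlamdef
  set tau : ℝ := Real.tanh Cr with htaudef
  have hlam0 : 0 < lam := sigmoid_pos _
  have hlam1 : lam < 1 := sigmoid_lt_one _
  have htau1 : tau < 1 := tanh_lt_one' _
  have hCr0 : 0 ≤ Cr := by
    have h1 := matNorm_nonneg Wr i0
    have h2 := matNorm_nonneg Ur i0
    have h3 : (0:ℝ) ≤ ‖br‖ := norm_nonneg _
    nlinarith
  have htau0 : 0 ≤ tau := by
    rw [htaudef, ← Real.tanh_zero]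
    exact tanh_mono hCr0
  set D : ℝ := max (‖xbar‖ - tau) 0 with hDdef
  have hD0 : 0 ≤ D := le_max_right _ _
  have htend : Tendsto (fun k : ℕ => lam ^ k * D) atTop (nhds 0) := by
    simpa using (tendsto_pow_atTop_nhds_zero_of_lt_one hlam0.le hlam1).mul_const D
  obtain ⟨kbar, hkbar⟩ := eventually_atTop.1
    (htend.eventually (gt_mem_nhds (by linarith : (0:ℝ) < 1 - tau)))
  refine ⟨kbar, fun u hu x hx0 hstep k hk => ?_⟩
  have hxstep : ∀ k j, x (k+1) j =
      _root_.sigmoid ((Wz.mulVec (u k) + Uz.mulVec (x k) + bz) j) * x k j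
      + (1 - _root_.sigmoid ((Wz.mulVec (u k) + Uz.mulVec (x k) + bz) j)) *
        Real.tanh ((Wr.mulVec (u k) + Ur.mulVec
          ((fun i => _root_.sigmoid ((Wf.mulVec (u k) + Uf.mulVec (x k) + bf) i)) * x k) + br) j) := by
    intro k j; rw [hstep k]; rfl
  have habs : ∀ (v : Fin nx → ℝ) (j : Fin nx), |v j| ≤ ‖v‖ :=
    fun v j => (Real.norm_eq_abs (v j)) ▸ norm_le_pi_norm v j
  have hinv : ∀ k, ‖x k‖ ≤ M := by
    intro k; induction k with
    | zero => rw [hx0]; exact le_max_left _ _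
    | succ k ih =>
      rw [pi_norm_le_iff_of_nonneg (le_trans zero_le_one hM1)]
      intro j
      rw [Real.norm_eq_abs, hxstep k j]
      have hz0 : (0:ℝ) ≤ _root_.sigmoid ((Wz.mulVec (u k) + Uz.mulVec (x k) + bz) j) :=
        (_root_.sigmoid_pos _).le
      have hz1 : _root_.sigmoid ((Wz.mulVec (u k) + Uz.mulVec (x k) + bz) j) ≤ 1 :=
        (_root_.sigmoid_lt_one _).le
      have hxj : |x k j| ≤ M := (habs (x k) j).trans ih
      refine (conv_bound _ _ _ M 1 hz0 hz1 hxj (abs_tanh_le_one _)).trans ?_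
      nlinarith
  have hfx : ∀ k, ‖(fun i => _root_.sigmoid ((Wf.mulVec (u k) + Uf.mulVec (x k) + bf) i)) * x k‖ ≤ M := by
    intro k
    rw [pi_norm_le_iff_of_nonneg (le_trans zero_le_one hM1)]
    intro i
    rw [Real.norm_eq_abs, Pi.mul_apply, abs_mul,
      abs_of_nonneg (_root_.sigmoid_pos _).le]
    calc _root_.sigmoid _ * |x k i| ≤ 1 * |x k i| :=
          mul_le_mul_of_nonneg_right (_root_.sigmoid_lt_one _).le (abs_nonneg _)
      _ = |x k i| := one_mul _
      _ ≤ M := (habs (x k) i).trans (hinv k)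
  have hdecay : ∀ k, ‖x k‖ ≤ tau + lam ^ k * D := by
    intro k; induction k with
    | zero =>
      rw [hx0, pow_zero, one_mul]
      have := le_max_left (‖xbar‖ - tau) 0
      rw [hDdef]; linarith
    | succ k ih =>
      have hpk : 0 ≤ lam ^ k * D := mul_nonneg (pow_nonneg hlam0.le _) hD0
      have hpk1 : 0 ≤ lam ^ (k+1) * D := mul_nonneg (pow_nonneg hlam0.le _) hD0
      rw [pi_norm_le_iff_of_nonneg (by linarith)]
      intro j
      rw [Real.norm_eq_abs, hxstep k j]
      have haz : |(Wz.mulVec (u k) + Uz.mulVec (x k) + bz) j| ≤ Cz :=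
        arg_bound Wz Uz bz (u k) (x k) M (hu k) (hinv k) j
      have hzlam : _root_.sigmoid ((Wz.mulVec (u k) + Uz.mulVec (x k) + bz) j) ≤ lam :=
        sigmoid_mono ((le_abs_self _).trans haz)
      have har : |(Wr.mulVec (u k) + Ur.mulVec
          ((fun i => _root_.sigmoid ((Wf.mulVec (u k) + Uf.mulVec (x k) + bf) i)) * x k) + br) j| ≤ Cr :=
        arg_bound Wr Ur br (u k) _ M (hu k) (hfx k) j
      have hrt : |Real.tanh ((Wr.mulVec (u k) + Ur.mulVec
          ((fun i => _root_.sigmoid ((Wf.mulVec (u k) + Uf.mulVec (x k) + bf) i)) * x k) + br) j)| ≤ tau :=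
        abs_tanh_le har
      have hxj : |x k j| ≤ tau + lam ^ k * D := (habs (x k) j).trans ih
      have hz0 : (0:ℝ) ≤ _root_.sigmoid ((Wz.mulVec (u k) + Uz.mulVec (x k) + bz) j) :=
        (_root_.sigmoid_pos _).le
      have hz1 : _root_.sigmoid ((Wz.mulVec (u k) + Uz.mulVec (x k) + bz) j) ≤ 1 :=
        (_root_.sigmoid_lt_one _).le
      refine (conv_bound _ _ _ (tau + lam ^ k * D) tau hz0 hz1 hxj hrt).trans ?_
      have : lam ^ (k+1) * D = lam * (lam ^ k * D) := by ring
      rw [this]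
      nlinarith
  have hkk : lam ^ k * D ≤ lam ^ kbar * D :=
    mul_le_mul_of_nonneg_right (pow_le_pow_of_le_one hlam0.le hlam1.le hk) hD0
  have := hkbar kbar le_rfl
  linarith [hdecay k]
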